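/- For every n ≥ 5 there exists a simple graph on n vertices with exactly 3n − 5 edges that is non-planar but becomes planar after removing a single suitable edge. -/

import Mathlib

open SimpleGraph

/-- `H` is a minor of `G`: there are nonempty, pairwise disjoint, connected branch
sets in `G`, one for each vertex of `H`, with an edge of `G` between the branch
sets of any two adjacent vertices of `H`. -/
def IsMinor {W V : Type*} (H : SimpleGraph W) (G : SimpleGraph V) : Prop :=
  ∃ f : W → Set V,
    (∀ w, (f w).Nonempty) ∧
    (∀ w, (G.induce (f w)).Connected) ∧
    (Pairwise fun w₁ w₂ => Disjoint (f w₁) (f w₂)) ∧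
    ∀ ⦃a b⦄, H.Adj a b → ∃ u ∈ f a, ∃ v ∈ f b, G.Adj u v

/-- Planarity, via Wagner's theorem: a graph is planar iff it has neither a `K₅`
minor nor a `K₃,₃` minor. -/
def IsPlanar {V : Type*} (G : SimpleGraph V) : Prop :=
  ¬ IsMinor (completeGraph (Fin 5)) G ∧
  ¬ IsMinor (completeBipartiteGraph (Fin 3) (Fin 3)) G

/-- The join of two graphs: their disjoint union plus all edges in between. -/
def Join {α β : Type*} (G : SimpleGraph α) (H : SimpleGraph β) :
    SimpleGraph (α ⊕ β) where
  Adj x y := match x, y with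
    | .inl a, .inl b => G.Adj a b
    | .inl _, .inr _ => True
    | .inr _, .inl _ => True
    | .inr a, .inr b => H.Adj a b
  symm := ⟨by rintro (a | a) (b | b) h <;> first | exact h.symm | trivial⟩
  loopless := ⟨by rintro (a | a) h <;> exact h.ne rfl⟩

/-- The graph `Gₙ`: a cycle on `n - 2` vertices, two poles `p = Sum.inr 0` and
`q = Sum.inr 1` adjacent to all cycle vertices, and the pole edge `pq`. -/
def Gn (n : ℕ) : SimpleGraph (Fin (n - 2) ⊕ Fin 2) :=
  Join (cycleGraph (n - 2)) (⊤ : SimpleGraph (Fin 2))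



namespace SparseAux

def NConvex (S : Set ℕ) : Prop := ∀ a ∈ S, ∀ b ∈ S, ∀ c, a ≤ c → c ≤ b → c ∈ S

lemma convex_order {S T : Set ℕ} (hS : NConvex S) (hT : NConvex T)
    (hd : Disjoint S T) (hne : S.Nonempty) (hne' : T.Nonempty) :
    (∀ s ∈ S, ∀ t ∈ T, s < t) ∨ (∀ s ∈ S, ∀ t ∈ T, t < s) := by
  have hSm := Nat.sInf_mem hne
  have hTm := Nat.sInf_mem hne'
  have hne2 : sInf S ≠ sInf T := by
    intro h; exact (Set.disjoint_left.mp hd hSm (h ▸ hTm))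
  rcases lt_or_gt_of_ne hne2 with h | h
  · left
    intro s hs t ht
    by_contra hlt
    push_neg at hlt
    have : t ∈ S := hS _ hSm _ hs t (le_trans (Nat.le_of_lt h) (Nat.sInf_le ht)) hlt
    exact Set.disjoint_left.mp hd this ht
  · right
    intro s hs t ht
    by_contra hlt
    push_neg at hlt
    have : s ∈ T := hT _ hTm _ ht s (le_trans (Nat.le_of_lt h) (Nat.sInf_le hs)) hlt
    exact Set.disjoint_right.mp hd this hs

section Cyc

variable {m : ℕ} [NeZero m]

/-- coordinates after rotating `v` to the top position `m-1`. -/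
def gc (v x : Fin m) : ℕ := ((x - v - 1 : Fin m) : ℕ)

lemma gc_inj (v : Fin m) : Function.Injective (gc v) := by
  intro x y h
  have h2 : (x - v - 1 : Fin m) = y - v - 1 := Fin.ext h
  have h3 := congrArg (fun z : Fin m => z + 1 + v) h2
  simpa [sub_add_cancel] using h3

lemma gc_self (v : Fin m) : gc v v = m - 1 := by
  rcases m with - | k
  · exact absurd rfl (NeZero.ne 0)
  · show ((v - v - 1 : Fin (k+1)) : ℕ) = k + 1 - 1
    rw [sub_self, Fin.coe_sub_one]
    simp

lemma gc_lt (v x : Fin m) : gc v x < m := (x - v - 1).isLt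

lemma gc_ne_top {v x : Fin m} (h : x ≠ v) : gc v x ≠ m - 1 := by
  intro hc
  exact h (gc_inj v (by rw [hc, gc_self]))

lemma adj_gc (hm : 3 ≤ m) {v x y : Fin m} (hx : x ≠ v) (hy : y ≠ v)
    (h : (cycleGraph m).Adj x y) : gc v x = gc v y + 1 ∨ gc v y = gc v x + 1 := by
  rcases m with - | k
  · exact absurd rfl (NeZero.ne 0)
  have key : ∀ a b : Fin (k+1), a ≠ v → (b - a : Fin (k+1)).val = 1 →
      gc v b = gc v a + 1 := by
    intro a b ha hab
    have hb : b = 1 + a := by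
      have : b - a = 1 := Fin.ext (by rw [Fin.val_one', Nat.mod_eq_of_lt (by omega)]; omega)
      have := congrArg (fun z : Fin (k+1) => z + a) this
      simpa [sub_add_cancel] using this
    have hgb : gc v b = ((a - v : Fin (k+1)) : ℕ) := by
      show ((b - v - 1 : Fin (k+1)) : ℕ) = _
      rw [hb, show (1 + a - v - 1 : Fin (k+1)) = a - v by abel]
    have hne : (a - v : Fin (k+1)) ≠ 0 := sub_ne_zero.mpr ha
    have : gc v a = ((a - v : Fin (k+1)) : ℕ) - 1 := by
      show ((a - v - 1 : Fin (k+1)) : ℕ) = _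
      rw [Fin.coe_sub_one, if_neg hne]
    have hpos : 0 < ((a - v : Fin (k+1)) : ℕ) := by
      rcases Nat.eq_zero_or_pos ((a - v : Fin (k+1)) : ℕ) with h0 | h0
      · exact absurd (Fin.ext (by simpa using h0)) hne
      · exact h0
    omega
  rcases cycleGraph_adj'.mp h with h1 | h1
  · left; exact key y x hy h1
  · right; exact key x y hx h1

end Cyc

end SparseAux
namespace SparseAux

section Cyc2

variable {m : ℕ} [NeZero m]

lemma walk_between (hm : 3 ≤ m) {A : Set (Fin m)} {v : Fin m} (hv : v ∉ A) :
    ∀ {a b : ↥A} (w : ((cycleGraph m).induce A).Walk a b) (c : ℕ),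
      ((gc v a.1 ≤ c ∧ c ≤ gc v b.1) ∨ (gc v b.1 ≤ c ∧ c ≤ gc v a.1)) →
      ∃ x ∈ A, gc v x = c := by
  intro a b w
  induction w with
  | nil =>
    rename_i u
    intro c hc
    have : c = gc v u.1 := by omega
    exact ⟨u.1, u.2, this.symm⟩
  | @cons u y z h p ih =>
    intro c hc
    have hadj : (cycleGraph m).Adj u.1 y.1 := h
    have hu : u.1 ≠ v := fun he => hv (he ▸ u.2)
    have hy : y.1 ≠ v := fun he => hv (he ▸ y.2)
    have hpm := adj_gc hm hu hy hadj
    by_cases hc' : c = gc v u.1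
    · exact ⟨u.1, u.2, hc'.symm⟩
    · exact ih c (by omega)

lemma connected_convex (hm : 3 ≤ m) {A : Set (Fin m)}
    (hA : ((cycleGraph m).induce A).Connected) {v : Fin m} (hv : v ∉ A) :
    NConvex (gc v '' A) := by
  rintro - ⟨a, ha, rfl⟩ - ⟨b, hb, rfl⟩ c h1 h2
  obtain ⟨w⟩ := hA.preconnected ⟨a, ha⟩ ⟨b, hb⟩
  obtain ⟨x, hx, hgx⟩ := walk_between hm hv w c (Or.inl ⟨h1, h2⟩)
  exact ⟨x, hx, hgx⟩

lemma val_eq_one_of (hm : 3 ≤ m) {z : Fin m} (h : z.val = 1) : z = 1 :=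
  Fin.ext (by rw [Fin.val_one', Nat.mod_eq_of_lt (by omega)]; exact h)

lemma boundary (hm : 3 ≤ m) {A : Set (Fin m)} (hne : A.Nonempty)
    (hA : ((cycleGraph m).induce A).Connected) {v : Fin m} (hv : v ∉ A) :
    ∃ L R : ℕ, ∀ x a, x ∉ A → a ∈ A → (cycleGraph m).Adj x a →
      gc v x = L ∨ gc v x = R := by
  set S := gc v '' A with hS
  have hconv : NConvex S := connected_convex hm hA hv
  have hSne : S.Nonempty := hne.image _
  have hbdd : BddAbove S := ⟨m, fun y hy => by
    obtain ⟨a, _, rfl⟩ := hy; exact le_of_lt (gc_lt v a)⟩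
  set α := sInf S with hα
  set β := sSup S with hβ
  have hαS : α ∈ S := Nat.sInf_mem hSne
  have hβS : β ∈ S := Nat.sSup_mem hSne hbdd
  have hne_top : ∀ c ∈ S, c ≤ m - 2 := by
    rintro - ⟨a, ha, rfl⟩
    have h1 : gc v a ≠ m - 1 := gc_ne_top (fun he => hv (he ▸ ha))
    have h2 := gc_lt v a
    omega
  have hβ2 : β ≤ m - 2 := hne_top β hβS
  refine ⟨(α + m - 1) % m, β + 1, ?_⟩
  intro x a hx ha hadj
  have haS : gc v a ∈ S := ⟨a, ha, rfl⟩
  have haα : α ≤ gc v a := Nat.sInf_le haS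
  have haβ : gc v a ≤ β := le_csSup hbdd haS
  by_cases hxv : x = v
  · subst hxv
    rw [gc_self]
    rcases cycleGraph_adj'.mp hadj with h1 | h1
    · -- x - a = 1, i.e. a = x - 1, gc v a = m - 2
      have hxa : x - a = 1 := val_eq_one_of hm h1
      have ha' : a = x - 1 := by
        have := congrArg (fun z : Fin m => x - z) hxa
        simpa [sub_sub_cancel] using this
      have hgc : gc x a = m - 2 := by
        rcases m with - | k
        · exact absurd rfl (NeZero.ne 0)
        have h3 : (a - x - 1 : Fin (k+1)) = -1 - 1 := by
          rw [ha']; abel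
        show ((a - x - 1 : Fin (k+1)) : ℕ) = k + 1 - 2
        rw [h3, Fin.coe_sub_one, if_neg, Fin.coe_neg_one]
        · omega
        · intro hc
          have := congrArg Fin.val hc
          rw [Fin.coe_neg_one] at this
          simp at this
          omega
      have : β = m - 2 := le_antisymm hβ2 (hgc ▸ haβ)
      right; omega
    · -- a - x = 1, gc v a = 0
      have hxa : a - x = 1 := val_eq_one_of hm h1
      have hgc : gc x a = 0 := by
        show ((a - x - 1 : Fin m) : ℕ) = 0
        rw [hxa]; simp
      have hα0 : α = 0 := by omega
      left
      rw [hα0, Nat.mod_eq_of_lt (by omega)]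
      omega
  · have hav : a ≠ v := fun he => hv (he ▸ ha)
    have hpm := adj_gc hm hxv hav hadj
    have hxS : gc v x ∉ S := by
      rintro ⟨y, hy, hee⟩
      exact hx ((gc_inj v hee.symm) ▸ hy)
    have hout : gc v x < α ∨ β < gc v x := by
      by_contra hcon
      push_neg at hcon
      exact hxS (hconv α hαS β hβS _ hcon.1 hcon.2)
    rcases hout with hco | hco
    · left
      have h1 : gc v x = α - 1 ∧ 1 ≤ α := by omega
      rw [show α + m - 1 = (α - 1) + m by omega, Nat.add_mod_right,
        Nat.mod_eq_of_lt (by omega)]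
      omega
    · right; omega

end Cyc2

end SparseAux
namespace SparseAux

section ML

variable {m : ℕ} [NeZero m]

/-- adjacency between sets in the cycle graph -/
def CycAdj (A B : Set (Fin m)) : Prop :=
  ∃ a ∈ A, ∃ b ∈ B, (cycleGraph m).Adj a b

lemma mid_contra {S T U : Set ℕ} (hST : ∀ s ∈ S, ∀ t ∈ T, s < t)
    (hTU : ∀ t ∈ T, ∀ u ∈ U, t < u) (hT : T.Nonempty)
    {s u : ℕ} (hs : s ∈ S) (hu : u ∈ U) (h : s = u + 1 ∨ u = s + 1) : False := by
  obtain ⟨t, ht⟩ := hT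
  have := hST s hs t ht
  have := hTU t ht u hu
  omega

/-- an arc with three disjoint neighbours is impossible -/
lemma no_three_nbrs (hm : 3 ≤ m) {A X1 X2 X3 : Set (Fin m)}
    (hA : ((cycleGraph m).induce A).Connected)
    (hd1 : Disjoint A X1) (hd2 : Disjoint A X2) (hd3 : Disjoint A X3)
    (h12 : Disjoint X1 X2) (h13 : Disjoint X1 X3) (h23 : Disjoint X2 X3)
    (ha1 : CycAdj X1 A) (ha2 : CycAdj X2 A) (ha3 : CycAdj X3 A) : False := by
  obtain ⟨x1, hx1, a1, ha1m, hadj1⟩ := ha1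
  obtain ⟨x2, hx2, a2, ha2m, hadj2⟩ := ha2
  obtain ⟨x3, hx3, a3, ha3m, hadj3⟩ := ha3
  have hv : x1 ∉ A := fun h => Set.disjoint_left.mp hd1 h hx1
  obtain ⟨L, R, hLR⟩ := boundary hm ⟨a1, ha1m⟩ hA hv
  have e1 := hLR x1 a1 hv ha1m hadj1
  have e2 := hLR x2 a2 (fun h => Set.disjoint_left.mp hd2 h hx2) ha2m hadj2
  have e3 := hLR x3 a3 (fun h => Set.disjoint_left.mp hd3 h hx3) ha3m hadj3
  have d12 : gc x1 x1 ≠ gc x1 x2 := fun h =>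
    Set.disjoint_left.mp h12 hx1 ((gc_inj x1 h) ▸ hx2)
  have d13 : gc x1 x1 ≠ gc x1 x3 := fun h =>
    Set.disjoint_left.mp h13 hx1 ((gc_inj x1 h) ▸ hx3)
  have d23 : gc x1 x2 ≠ gc x1 x3 := fun h =>
    Set.disjoint_left.mp h23 hx2 ((gc_inj x1 h) ▸ hx3)
  omega

/-- three pairwise adjacent connected sets must cover every vertex -/
lemma no_three_mutual (hm : 3 ≤ m) {A1 A2 A3 : Set (Fin m)} {v : Fin m}
    (hv1 : v ∉ A1) (hv2 : v ∉ A2) (hv3 : v ∉ A3)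
    (hc1 : ((cycleGraph m).induce A1).Connected)
    (hc2 : ((cycleGraph m).induce A2).Connected)
    (hc3 : ((cycleGraph m).induce A3).Connected)
    (d12 : Disjoint A1 A2) (d13 : Disjoint A1 A3) (d23 : Disjoint A2 A3)
    (e12 : CycAdj A1 A2) (e13 : CycAdj A1 A3) (e23 : CycAdj A2 A3) : False := by
  have hne1 : A1.Nonempty := Set.nonempty_coe_sort.mp hc1.nonempty
  have hne2 : A2.Nonempty := Set.nonempty_coe_sort.mp hc2.nonempty
  have hne3 : A3.Nonempty := Set.nonempty_coe_sort.mp hc3.nonempty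
  set S1 := gc v '' A1
  set S2 := gc v '' A2
  set S3 := gc v '' A3
  have cv1 : NConvex S1 := connected_convex hm hc1 hv1
  have cv2 : NConvex S2 := connected_convex hm hc2 hv2
  have cv3 : NConvex S3 := connected_convex hm hc3 hv3
  have sne1 : S1.Nonempty := hne1.image _
  have sne2 : S2.Nonempty := hne2.image _
  have sne3 : S3.Nonempty := hne3.image _
  have key : ∀ {A B : Set (Fin m)}, A ⊆ A → v ∉ A → v ∉ B → CycAdj A B →
      ∃ s ∈ gc v '' A, ∃ t ∈ gc v '' B, s = t + 1 ∨ t = s + 1 := by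
    rintro A B - hvA hvB ⟨a, ha, b, hb, hadj⟩
    exact ⟨gc v a, ⟨a, ha, rfl⟩, gc v b, ⟨b, hb, rfl⟩,
      adj_gc hm (fun h => hvA (h ▸ ha)) (fun h => hvB (h ▸ hb)) hadj⟩
  obtain ⟨s12, hs12, t12, ht12, p12⟩ := key (subset_refl _) hv1 hv2 e12
  obtain ⟨s13, hs13, t13, ht13, p13⟩ := key (subset_refl _) hv1 hv3 e13
  obtain ⟨s23, hs23, t23, ht23, p23⟩ := key (subset_refl _) hv2 hv3 e23
  have o12 := convex_order cv1 cv2 (Set.disjoint_image_of_injective (gc_inj v) d12) sne1 sne2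
  have o13 := convex_order cv1 cv3 (Set.disjoint_image_of_injective (gc_inj v) d13) sne1 sne3
  have o23 := convex_order cv2 cv3 (Set.disjoint_image_of_injective (gc_inj v) d23) sne2 sne3
  have flip : ∀ {S T : Set ℕ}, (∀ s ∈ S, ∀ t ∈ T, t < s) → (∀ t ∈ T, ∀ s ∈ S, t < s) :=
    fun h b hb a ha => h a ha b hb
  rcases o12 with o12 | o12 <;> rcases o13 with o13 | o13 <;> rcases o23 with o23 | o23
  · exact mid_contra o12 o23 sne2 hs13 ht13 p13
  · exact mid_contra o13 (flip o23) sne3 hs12 ht12 p12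
  · obtain ⟨w1, hw1⟩ := sne1
    obtain ⟨w2, hw2⟩ := sne2
    obtain ⟨w3, hw3⟩ := sne3
    have := o12 w1 hw1 w2 hw2
    have := o23 w2 hw2 w3 hw3
    have := o13 w1 hw1 w3 hw3
    omega
  · exact mid_contra (flip o13) o12 sne1 ht23 hs23 p23.symm
  · exact mid_contra (flip o12) o13 sne1 hs23 ht23 p23
  · obtain ⟨w1, hw1⟩ := sne1
    obtain ⟨w2, hw2⟩ := sne2
    obtain ⟨w3, hw3⟩ := sne3
    have := o12 w1 hw1 w2 hw2
    have := o13 w1 hw1 w3 hw3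
    have := o23 w2 hw2 w3 hw3
    omega
  · exact mid_contra o23 (flip o13) sne3 ht12 hs12 p12.symm
  · exact mid_contra (flip o23) (flip o12) sne2 ht13 hs13 p13.symm

end ML

end SparseAux
namespace SparseAux

section ML2

variable {m : ℕ} [NeZero m]

def AdjPair (S T : Set ℕ) : Prop := ∃ s ∈ S, ∃ t ∈ T, s = t + 1 ∨ t = s + 1

lemma bip_helper {S1 S2 S3 S4 : Set ℕ}
    (hb12 : ∀ s ∈ S1, ∀ t ∈ S2, s < t) (hb34 : ∀ s ∈ S3, ∀ t ∈ S4, s < t)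
    (o13 : (∀ s ∈ S1, ∀ t ∈ S3, s < t) ∨ (∀ s ∈ S1, ∀ t ∈ S3, t < s))
    (o14 : (∀ s ∈ S1, ∀ t ∈ S4, s < t) ∨ (∀ s ∈ S1, ∀ t ∈ S4, t < s))
    (ne1 : S1.Nonempty) (ne3 : S3.Nonempty)
    (e14 : AdjPair S1 S4) (e23 : AdjPair S2 S3) (e24 : AdjPair S2 S4) : False := by
  have flip : ∀ {S T : Set ℕ}, (∀ s ∈ S, ∀ t ∈ T, t < s) → (∀ t ∈ T, ∀ s ∈ S, t < s) :=
    fun h b hb a ha => h a ha b hb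
  obtain ⟨s14, hs14, t14, ht14, p14⟩ := e14
  obtain ⟨s23, hs23, t23, ht23, p23⟩ := e23
  obtain ⟨s24, hs24, t24, ht24, p24⟩ := e24
  rcases o14 with o14 | o14
  · rcases o13 with o13 | o13
    · exact mid_contra o13 hb34 ne3 hs14 ht14 p14
    · exact mid_contra (flip o13) hb12 ne1 ht23 hs23 p23.symm
  · exact mid_contra (flip o14) hb12 ne1 ht24 hs24 p24.symm

/-- four connected sets with bipartite-style adjacency can't avoid a vertex -/
lemma no_bip (hm : 3 ≤ m) {A1 A2 A3 A4 : Set (Fin m)} {v : Fin m}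
    (hv1 : v ∉ A1) (hv2 : v ∉ A2) (hv3 : v ∉ A3) (hv4 : v ∉ A4)
    (hc1 : ((cycleGraph m).induce A1).Connected)
    (hc2 : ((cycleGraph m).induce A2).Connected)
    (hc3 : ((cycleGraph m).induce A3).Connected)
    (hc4 : ((cycleGraph m).induce A4).Connected)
    (d12 : Disjoint A1 A2) (d13 : Disjoint A1 A3) (d14 : Disjoint A1 A4)
    (d23 : Disjoint A2 A3) (d24 : Disjoint A2 A4) (d34 : Disjoint A3 A4)
    (e13 : CycAdj A1 A3) (e14 : CycAdj A1 A4)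
    (e23 : CycAdj A2 A3) (e24 : CycAdj A2 A4) : False := by
  have hne1 : A1.Nonempty := Set.nonempty_coe_sort.mp hc1.nonempty
  have hne2 : A2.Nonempty := Set.nonempty_coe_sort.mp hc2.nonempty
  have hne3 : A3.Nonempty := Set.nonempty_coe_sort.mp hc3.nonempty
  have hne4 : A4.Nonempty := Set.nonempty_coe_sort.mp hc4.nonempty
  set S1 := gc v '' A1
  set S2 := gc v '' A2
  set S3 := gc v '' A3
  set S4 := gc v '' A4
  have sne1 : S1.Nonempty := hne1.image _
  have sne2 : S2.Nonempty := hne2.image _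
  have sne3 : S3.Nonempty := hne3.image _
  have sne4 : S4.Nonempty := hne4.image _
  have key : ∀ {A B : Set (Fin m)}, v ∉ A → v ∉ B → CycAdj A B →
      AdjPair (gc v '' A) (gc v '' B) := by
    rintro A B hvA hvB ⟨a, ha, b, hb, hadj⟩
    exact ⟨gc v a, ⟨a, ha, rfl⟩, gc v b, ⟨b, hb, rfl⟩,
      adj_gc hm (fun h => hvA (h ▸ ha)) (fun h => hvB (h ▸ hb)) hadj⟩
  have f13 := key hv1 hv3 e13
  have f14 := key hv1 hv4 e14
  have f23 := key hv2 hv3 e23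
  have f24 := key hv2 hv4 e24
  have ord : ∀ {A B : Set (Fin m)}, v ∉ A → v ∉ B →
      ((cycleGraph m).induce A).Connected → ((cycleGraph m).induce B).Connected →
      A.Nonempty → B.Nonempty → Disjoint A B →
      (∀ s ∈ gc v '' A, ∀ t ∈ gc v '' B, s < t) ∨
      (∀ s ∈ gc v '' A, ∀ t ∈ gc v '' B, t < s) :=
    fun hvA hvB hcA hcB hneA hneB hd =>
      convex_order (connected_convex hm hcA hvA) (connected_convex hm hcB hvB)
        (Set.disjoint_image_of_injective (gc_inj v) hd) (hneA.image _) (hneB.image _)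
  have o12 := ord hv1 hv2 hc1 hc2 hne1 hne2 d12
  have o34 := ord hv3 hv4 hc3 hc4 hne3 hne4 d34
  have o13 := ord hv1 hv3 hc1 hc3 hne1 hne3 d13
  have o14 := ord hv1 hv4 hc1 hc4 hne1 hne4 d14
  have o23 := ord hv2 hv3 hc2 hc3 hne2 hne3 d23
  have o24 := ord hv2 hv4 hc2 hc4 hne2 hne4 d24
  have flip : ∀ {S T : Set ℕ}, (∀ s ∈ S, ∀ t ∈ T, t < s) → (∀ t ∈ T, ∀ s ∈ S, t < s) :=
    fun h b hb a ha => h a ha b hb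
  rcases o12 with h12 | h12 <;> rcases o34 with h34 | h34
  · exact bip_helper h12 h34 o13 o14 sne1 sne3 f14 f23 f24
  · exact bip_helper h12 (flip h34) o14 o13 sne1 sne4 f13 f24 f23
  · exact bip_helper (flip h12) h34 o23 o24 sne2 sne3 f24 f13 f14
  · exact bip_helper (flip h12) (flip h34) o24 o23 sne2 sne4 f23 f14 f13

end ML2

end SparseAux
namespace SparseAux

open Sum

section Graph

variable {m : ℕ} [NeZero m]

/-- the double wheel without its pole edge -/
abbrev DW (m : ℕ) : SimpleGraph (Fin m ⊕ Fin 2) :=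
  (Join (cycleGraph m) (⊤ : SimpleGraph (Fin 2))).deleteEdges {s(Sum.inr 0, Sum.inr 1)}

lemma join_adj_ll {i j : Fin m} :
    (Join (cycleGraph m) (⊤ : SimpleGraph (Fin 2))).Adj (inl i) (inl j) ↔
      (cycleGraph m).Adj i j := Iff.rfl

lemma join_adj_lr {i : Fin m} {t : Fin 2} :
    (Join (cycleGraph m) (⊤ : SimpleGraph (Fin 2))).Adj (inl i) (inr t) := trivial

lemma join_adj_rl {i : Fin m} {t : Fin 2} :
    (Join (cycleGraph m) (⊤ : SimpleGraph (Fin 2))).Adj (inr t) (inl i) := trivial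

lemma dw_adj_ll {i j : Fin m} :
    (DW m).Adj (inl i) (inl j) ↔ (cycleGraph m).Adj i j := by
  rw [deleteEdges_adj]
  constructor
  · exact fun h => h.1
  · intro h
    refine ⟨h, ?_⟩
    simp only [Set.mem_singleton_iff, Sym2.eq, Sym2.rel_iff', Prod.mk.injEq, Prod.swap_prod_mk]
    rintro (⟨h1, -⟩ | ⟨h1, -⟩) <;> exact absurd h1 (by simp)

lemma dw_adj_lr {i : Fin m} {t : Fin 2} : (DW m).Adj (inl i) (inr t) := by
  rw [deleteEdges_adj]
  refine ⟨join_adj_lr, ?_⟩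
  simp only [Set.mem_singleton_iff, Sym2.eq, Sym2.rel_iff', Prod.mk.injEq, Prod.swap_prod_mk]
  rintro (⟨h1, -⟩ | ⟨h1, -⟩) <;> exact absurd h1 (by simp)

lemma dw_adj_rr {s t : Fin 2} : ¬ (DW m).Adj (inr s) (inr t) := by
  rw [deleteEdges_adj]
  rintro ⟨h1, h2⟩
  have hst : s ≠ t := by
    intro h; subst h; exact (Join (cycleGraph m) ⊤).loopless.irrefl _ h1
  apply h2
  simp only [Set.mem_singleton_iff, Sym2.eq, Sym2.rel_iff', Prod.mk.injEq, Prod.swap_prod_mk]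
  fin_cases s <;> fin_cases t <;> simp_all

/-- connectivity descends from `DW` to the cycle for pole-free sets -/
lemma pure_conn (hm : 3 ≤ m) {B : Set (Fin m ⊕ Fin 2)} (hB : ∀ x ∈ B, ∃ i, x = Sum.inl i)
    (hc : ((DW m).induce B).Connected) :
    ((cycleGraph m).induce {i | Sum.inl i ∈ B}).Connected := by
  set A := {i : Fin m | Sum.inl i ∈ B} with hA
  have aux : ∀ {x y : ↥B} (w : ((DW m).induce B).Walk x y) (i j : Fin m)
      (hi : Sum.inl i ∈ B) (hj : Sum.inl j ∈ B), x.1 = Sum.inl i → y.1 = Sum.inl j →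
      ((cycleGraph m).induce A).Reachable ⟨i, hi⟩ ⟨j, hj⟩ := by
    intro x y w
    induction w with
    | nil =>
      intro i j hi hj hx hy
      have : i = j := by rw [hx] at hy; exact Sum.inl.inj hy
      subst this
      rfl
    | @cons u y' z hadj p ih =>
      intro i j hi hj hx hz
      obtain ⟨k, hk⟩ := hB y'.1 y'.2
      have hkB : Sum.inl k ∈ B := hk ▸ y'.2
      have h1 : (DW m).Adj u.1 y'.1 := hadj
      rw [hx, hk] at h1
      have hcyc : (cycleGraph m).Adj i k := dw_adj_ll.mp h1
      have step : ((cycleGraph m).induce A).Adj ⟨i, hi⟩ ⟨k, hkB⟩ := hcyc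
      exact step.reachable.trans (ih k j hkB hj hk hz)
  haveI : Nonempty ↥A := by
    obtain ⟨⟨x, hx⟩⟩ := hc.nonempty
    obtain ⟨i, rfl⟩ := hB x hx
    exact ⟨⟨i, hx⟩⟩
  refine ⟨fun x y => ?_⟩
  obtain ⟨i, hi⟩ := x
  obtain ⟨j, hj⟩ := y
  obtain ⟨w⟩ := hc.preconnected ⟨Sum.inl i, hi⟩ ⟨Sum.inl j, hj⟩
  exact aux w i j hi hj rfl rfl

/-- connectivity lifts from the cycle to any graph containing its `inl` copy -/
lemma conn_up {G : SimpleGraph (Fin m ⊕ Fin 2)}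
    (hGA : ∀ i j, (cycleGraph m).Adj i j → G.Adj (Sum.inl i) (Sum.inl j))
    {A : Set (Fin m)} (hc : ((cycleGraph m).induce A).Connected) :
    (G.induce (Sum.inl '' A)).Connected := by
  have aux : ∀ {a b : ↥A} (w : ((cycleGraph m).induce A).Walk a b),
      (G.induce (Sum.inl '' A)).Reachable ⟨Sum.inl a.1, ⟨a.1, a.2, rfl⟩⟩
        ⟨Sum.inl b.1, ⟨b.1, b.2, rfl⟩⟩ := by
    intro a b w
    induction w with
    | nil => rfl
    | @cons u y z hadj p ih =>
      have step : (G.induce (Sum.inl '' A)).Adj ⟨Sum.inl u.1, ⟨u.1, u.2, rfl⟩⟩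
          ⟨Sum.inl y.1, ⟨y.1, y.2, rfl⟩⟩ := hGA _ _ hadj
      exact step.reachable.trans ih
  haveI : Nonempty ↥(Sum.inl '' A : Set (Fin m ⊕ Fin 2)) := by
    obtain ⟨⟨i, hi⟩⟩ := hc.nonempty
    exact ⟨⟨Sum.inl i, ⟨i, hi, rfl⟩⟩⟩
  refine ⟨fun x y => ?_⟩
  obtain ⟨x, hx⟩ := x
  obtain ⟨y, hy⟩ := y
  obtain ⟨i, hi, rfl⟩ := hx
  obtain ⟨j, hj, rfl⟩ := hy
  obtain ⟨w⟩ := hc.preconnected ⟨i, hi⟩ ⟨j, hj⟩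
  exact aux w

/-- a set with a dominating hub is connected -/
lemma hub_conn {V : Type*} (G : SimpleGraph V) {B : Set V} {hub : V} (hhub : hub ∈ B)
    (h : ∀ x ∈ B, x ≠ hub → G.Adj hub x) : (G.induce B).Connected := by
  haveI : Nonempty ↥B := ⟨⟨hub, hhub⟩⟩
  refine ⟨fun x y => ?_⟩
  have key : ∀ z : ↥B, (G.induce B).Reachable ⟨hub, hhub⟩ z := by
    intro ⟨z, hz⟩
    by_cases hzh : z = hub
    · subst hzh; rfl
    · have step : (G.induce B).Adj ⟨hub, hhub⟩ ⟨z, hz⟩ := h z hz hzh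
      exact step.reachable
  exact (key x).symm.trans (key y)

lemma adj_succ (hm : 3 ≤ m) {i : Fin m} (h : i.val + 1 < m) :
    (cycleGraph m).Adj i ⟨i.val + 1, h⟩ := by
  rw [cycleGraph_adj']
  right
  rw [Fin.sub_def]
  simp only
  rw [show m - i.val + (i.val + 1) = m + 1 by omega, Nat.add_mod_left,
    Nat.mod_eq_of_lt (by omega)]

lemma adj_wrap (hm : 3 ≤ m) : (cycleGraph m).Adj ⟨0, by omega⟩ ⟨m - 1, by omega⟩ := by
  rw [cycleGraph_adj']
  left
  rw [Fin.sub_def]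
  simp only
  rw [show m - (m-1) + 0 = 1 by omega, Nat.mod_eq_of_lt (by omega)]

lemma arc_conn (hm : 3 ≤ m) {lo : ℕ} (hlo : lo < m) :
    ((cycleGraph m).induce {i : Fin m | lo ≤ i.val}).Connected := by
  set A := {i : Fin m | lo ≤ i.val} with hA
  have top_mem : (⟨m - 1, by omega⟩ : Fin m) ∈ A := by show lo ≤ m - 1; omega
  have key : ∀ k (i : Fin m) (hi : i ∈ A), i.val + k = m - 1 →
      ((cycleGraph m).induce A).Reachable ⟨i, hi⟩ ⟨⟨m - 1, by omega⟩, top_mem⟩ := by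
    intro k
    induction k with
    | zero =>
      intro i hi hik
      rw [show (⟨i, hi⟩ : ↥A) = ⟨⟨m - 1, by omega⟩, top_mem⟩ from
        Subtype.ext (Fin.ext (show i.val = m - 1 by omega))]
    | succ k ih =>
      intro i hi hik
      have hlt : i.val + 1 < m := by omega
      have hi' : lo ≤ i.val := hi
      have hmem : (⟨i.val + 1, hlt⟩ : Fin m) ∈ A := by show lo ≤ i.val + 1; omega
      have step : ((cycleGraph m).induce A).Adj ⟨i, hi⟩ ⟨⟨i.val + 1, hlt⟩, hmem⟩ :=
        adj_succ hm hlt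
      exact step.reachable.trans (ih ⟨i.val + 1, hlt⟩ hmem (by show i.val + 1 + k = m - 1; omega))
  haveI : Nonempty ↥A := ⟨⟨⟨lo, hlo⟩, by show lo ≤ lo; omega⟩⟩
  refine ⟨fun x y => ?_⟩
  obtain ⟨x, hx⟩ := x
  obtain ⟨y, hy⟩ := y
  have hx' : lo ≤ x.val := hx
  have hy' : lo ≤ y.val := hy
  have h1 := key (m - 1 - x.val) x hx (by omega)
  have h2 := key (m - 1 - y.val) y hy (by omega)
  exact h1.trans h2.symm

end Graph

end SparseAux
namespace SparseAux

section NoMinor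

open Sum

variable {m : ℕ} [NeZero m]

theorem noK5 (hm : 3 ≤ m) : ¬ IsMinor (completeGraph (Fin 5)) (DW m) := by
  rintro ⟨f, hne, hconn, hdisj, hadj⟩
  classical
  set Pure : Fin 5 → Prop := fun w => ∀ x ∈ f w, ∃ i : Fin m, x = Sum.inl i with hPure
  have huniq : ∀ (t : Fin 2) (w1 w2 : Fin 5), Sum.inr t ∈ f w1 → Sum.inr t ∈ f w2 →
      w1 = w2 := by
    intro t w1 w2 h1 h2
    by_contra hne'
    exact Set.disjoint_left.mp (hdisj hne') h1 h2
  let wp : Fin 5 := if h : ∃ w, Sum.inr 0 ∈ f w then h.choose else 0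
  let wq : Fin 5 := if h : ∃ w, Sum.inr 1 ∈ f w then h.choose else 0
  have hwp : ∀ w, Sum.inr 0 ∈ f w → w = wp := by
    intro w hw
    have hex : ∃ w, Sum.inr 0 ∈ f w := ⟨w, hw⟩
    have : wp = hex.choose := by simp only [wp, dif_pos hex]
    rw [this]
    exact huniq 0 w hex.choose hw hex.choose_spec
  have hwq : ∀ w, Sum.inr 1 ∈ f w → w = wq := by
    intro w hw
    have hex : ∃ w, Sum.inr 1 ∈ f w := ⟨w, hw⟩
    have : wq = hex.choose := by simp only [wq, dif_pos hex]
    rw [this]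
    exact huniq 1 w hex.choose hw hex.choose_spec
  have hpure : ∀ w, w ≠ wp → w ≠ wq → Pure w := by
    intro w h1 h2 x hx
    rcases x with i | t
    · exact ⟨i, rfl⟩
    · exfalso
      fin_cases t
      · exact h1 (hwp w hx)
      · exact h2 (hwq w hx)
  have h1 : ({wp, wq} : Finset (Fin 5)).card ≤ 2 :=
    (Finset.card_insert_le _ _).trans (by simp)
  have hcard : 3 ≤ ({wp, wq}ᶜ : Finset (Fin 5)).card := by
    rw [Finset.card_compl, Fintype.card_fin]
    omega
  obtain ⟨t3, ht3sub, ht3card⟩ := Finset.exists_subset_card_eq hcard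
  obtain ⟨a, b, c, hab, hac, hbc, rfl⟩ := Finset.card_eq_three.mp ht3card
  have hma : a ≠ wp ∧ a ≠ wq := by
    have := ht3sub (show a ∈ ({a,b,c} : Finset (Fin 5)) by simp)
    simpa using this
  have hmb : b ≠ wp ∧ b ≠ wq := by
    have := ht3sub (show b ∈ ({a,b,c} : Finset (Fin 5)) by simp)
    simpa using this
  have hmc : c ≠ wp ∧ c ≠ wq := by
    have := ht3sub (show c ∈ ({a,b,c} : Finset (Fin 5)) by simp)
    simpa using this
  have hpa : Pure a := hpure a hma.1 hma.2
  have hpb : Pure b := hpure b hmb.1 hmb.2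
  have hpc : Pure c := hpure c hmc.1 hmc.2
  have hcard2 : ({a, b, c}ᶜ : Finset (Fin 5)).card = 2 := by
    rw [Finset.card_compl, Fintype.card_fin]
    rw [Finset.card_insert_of_notMem (by simp [hab, hac]),
      Finset.card_insert_of_notMem (by simp [hbc]), Finset.card_singleton]
  obtain ⟨d, e, hde, hdeeq⟩ := Finset.card_eq_two.mp hcard2
  have hd : d ∉ ({a, b, c} : Finset (Fin 5)) :=
    Finset.mem_compl.mp (hdeeq ▸ (by simp : d ∈ ({d, e} : Finset (Fin 5))))
  have he : e ∉ ({a, b, c} : Finset (Fin 5)) :=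
    Finset.mem_compl.mp (hdeeq ▸ (by simp : e ∈ ({d, e} : Finset (Fin 5))))
  simp only [Finset.mem_insert, Finset.mem_singleton, not_or] at hd he
  have hK : ∀ {w1 w2 : Fin 5}, w1 ≠ w2 → ∃ u ∈ f w1, ∃ v ∈ f w2, (DW m).Adj u v := by
    intro w1 w2 h
    exact hadj (by simp [completeGraph, h] : (completeGraph (Fin 5)).Adj w1 w2)
  have hv : ∃ i : Fin m, Sum.inl i ∈ f d ∨ Sum.inl i ∈ f e := by
    by_contra hcon
    push_neg at hcon
    obtain ⟨u, hu, v, hv', huv⟩ := hK hde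
    rcases u with i | s
    · exact (hcon i).1 hu
    rcases v with j | t
    · exact (hcon j).2 hv'
    · exact dw_adj_rr huv
  obtain ⟨v0, hv0⟩ := hv
  have hdis : ∀ {w1 w2 : Fin 5}, w1 ≠ w2 →
      Disjoint {i : Fin m | Sum.inl i ∈ f w1} {i | Sum.inl i ∈ f w2} :=
    fun h => Set.disjoint_left.mpr (fun i h1' h2' => Set.disjoint_left.mp (hdisj h) h1' h2')
  have hout : ∀ w : Fin 5, w ≠ d → w ≠ e → v0 ∉ {i : Fin m | Sum.inl i ∈ f w} := by
    intro w hwd hwe hmem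
    rcases hv0 with h | h
    · exact Set.disjoint_left.mp (hdisj hwd) hmem h
    · exact Set.disjoint_left.mp (hdisj hwe) hmem h
  have hcyc : ∀ {w1 w2 : Fin 5}, w1 ≠ w2 → Pure w1 → Pure w2 →
      CycAdj {i : Fin m | Sum.inl i ∈ f w1} {i | Sum.inl i ∈ f w2} := by
    intro w1 w2 h hp1 hp2
    obtain ⟨u, hu, v, hv', huv⟩ := hK h
    obtain ⟨i, rfl⟩ := hp1 u hu
    obtain ⟨j, rfl⟩ := hp2 v hv'
    exact ⟨i, hu, j, hv', dw_adj_ll.mp huv⟩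
  exact no_three_mutual hm
    (hout a (fun h => hd.1 h.symm) (fun h => he.1 h.symm))
    (hout b (fun h => hd.2.1 h.symm) (fun h => he.2.1 h.symm))
    (hout c (fun h => hd.2.2 h.symm) (fun h => he.2.2 h.symm))
    (pure_conn hm hpa (hconn a)) (pure_conn hm hpb (hconn b)) (pure_conn hm hpc (hconn c))
    (hdis hab) (hdis hac) (hdis hbc)
    (hcyc hab hpa hpb) (hcyc hac hpa hpc) (hcyc hbc hpb hpc)

end NoMinor

end SparseAux
namespace SparseAux

section NoMinor2

open Sum

variable {m : ℕ} [NeZero m]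

theorem noK33 (hm : 3 ≤ m) :
    ¬ IsMinor (completeBipartiteGraph (Fin 3) (Fin 3)) (DW m) := by
  rintro ⟨f, hne, hconn, hdisj, hadj⟩
  classical
  set Pure : Fin 3 ⊕ Fin 3 → Prop := fun w => ∀ x ∈ f w, ∃ i : Fin m, x = Sum.inl i
    with hPure
  have huniq : ∀ (t : Fin 2) (w1 w2 : Fin 3 ⊕ Fin 3), Sum.inr t ∈ f w1 →
      Sum.inr t ∈ f w2 → w1 = w2 := by
    intro t w1 w2 h1 h2
    by_contra hne'
    exact Set.disjoint_left.mp (hdisj hne') h1 h2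
  have hnp : ∀ w, ¬ Pure w → ∃ t : Fin 2, Sum.inr t ∈ f w := by
    intro w h
    simp only [hPure, not_forall] at h
    obtain ⟨x, hx, h2⟩ := h
    rcases x with i | t
    · exact absurd ⟨i, rfl⟩ h2
    · exact ⟨t, hx⟩
  have h3np : ∀ w1 w2 w3 : Fin 3 ⊕ Fin 3, w1 ≠ w2 → w1 ≠ w3 → w2 ≠ w3 →
      ¬ Pure w1 → ¬ Pure w2 → ¬ Pure w3 → False := by
    intro w1 w2 w3 h12 h13 h23 hn1 hn2 hn3
    obtain ⟨t1, ht1⟩ := hnp w1 hn1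
    obtain ⟨t2, ht2⟩ := hnp w2 hn2
    obtain ⟨t3, ht3⟩ := hnp w3 hn3
    by_cases e12 : t1 = t2
    · exact h12 (huniq t1 w1 w2 ht1 (e12 ▸ ht2))
    by_cases e13 : t1 = t3
    · exact h13 (huniq t1 w1 w3 ht1 (e13 ▸ ht3))
    have e23 : t2 = t3 := by
      have i1 := t1.isLt
      have i2 := t2.isLt
      have i3 := t3.isLt
      have k12 : t1.val ≠ t2.val := fun h => e12 (Fin.ext h)
      have k13 : t1.val ≠ t3.val := fun h => e13 (Fin.ext h)
      exact Fin.ext (by omega)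
    exact h23 (huniq t2 w2 w3 ht2 (e23 ▸ ht3))
  have hK : ∀ (a b : Fin 3), ∃ u ∈ f (inl a), ∃ v ∈ f (inr b), (DW m).Adj u v := by
    intro a b
    exact hadj (by simp [completeBipartiteGraph] :
      (completeBipartiteGraph (Fin 3) (Fin 3)).Adj (inl a) (inr b))
  have hdis : ∀ {w1 w2 : Fin 3 ⊕ Fin 3}, w1 ≠ w2 →
      Disjoint {i : Fin m | Sum.inl i ∈ f w1} {i | Sum.inl i ∈ f w2} :=
    fun h => Set.disjoint_left.mpr (fun i h1' h2' => Set.disjoint_left.mp (hdisj h) h1' h2')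
  have hcyc : ∀ (a b : Fin 3), Pure (inl a) → Pure (inr b) →
      CycAdj {i : Fin m | Sum.inl i ∈ f (inl a)} {i | Sum.inl i ∈ f (inr b)} := by
    intro a b hp1 hp2
    obtain ⟨u, hu, v, hv', huv⟩ := hK a b
    obtain ⟨i, rfl⟩ := hp1 u hu
    obtain ⟨j, rfl⟩ := hp2 v hv'
    exact ⟨i, hu, j, hv', dw_adj_ll.mp huv⟩
  have cycadj_symm : ∀ {A B : Set (Fin m)}, CycAdj A B → CycAdj B A := by
    rintro A B ⟨a, ha, b, hb, h⟩
    exact ⟨b, hb, a, ha, h.symm⟩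
  have two_compl : ∀ z : Fin 3, ∃ z1 z2 : Fin 3, z1 ≠ z2 ∧ z1 ≠ z ∧ z2 ≠ z := by
    intro z
    fin_cases z
    · exact ⟨1, 2, by decide, by decide, by decide⟩
    · exact ⟨0, 2, by decide, by decide, by decide⟩
    · exact ⟨0, 1, by decide, by decide, by decide⟩
  by_cases hallR : ∀ b : Fin 3, Pure (inr b)
  · by_cases hsomeL : ∃ a : Fin 3, Pure (inl a)
    · obtain ⟨a, hpa⟩ := hsomeL
      exact no_three_nbrs hm (pure_conn hm hpa (hconn (inl a)))
        (hdis (by simp)) (hdis (by simp)) (hdis (by simp))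
        (hdis (by simp : (inr 0 : Fin 3 ⊕ Fin 3) ≠ inr 1))
        (hdis (by simp : (inr 0 : Fin 3 ⊕ Fin 3) ≠ inr 2))
        (hdis (by simp : (inr 1 : Fin 3 ⊕ Fin 3) ≠ inr 2))
        (cycadj_symm (hcyc a 0 hpa (hallR 0)))
        (cycadj_symm (hcyc a 1 hpa (hallR 1)))
        (cycadj_symm (hcyc a 2 hpa (hallR 2)))
    · push_neg at hsomeL
      exact h3np (inl 0) (inl 1) (inl 2) (by simp) (by simp) (by simp)
        (hsomeL 0) (hsomeL 1) (hsomeL 2)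
  · push_neg at hallR
    obtain ⟨bR, hbR⟩ := hallR
    by_cases hallL : ∀ a : Fin 3, Pure (inl a)
    · -- find a pure right set
      obtain ⟨b1, b2, hb12, hb1R, hb2R⟩ := two_compl bR
      have hpureR : ∃ b : Fin 3, Pure (inr b) := by
        by_contra hcon
        push_neg at hcon
        exact h3np (inr bR) (inr b1) (inr b2) (by simp [Ne.symm hb1R])
          (by simp [Ne.symm hb2R]) (by simp [hb12]) hbR (hcon b1) (hcon b2)
      obtain ⟨b, hpb⟩ := hpureR
      exact no_three_nbrs hm (pure_conn hm hpb (hconn (inr b)))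
        (hdis (by simp)) (hdis (by simp)) (hdis (by simp))
        (hdis (by simp : (inl 0 : Fin 3 ⊕ Fin 3) ≠ inl 1))
        (hdis (by simp : (inl 0 : Fin 3 ⊕ Fin 3) ≠ inl 2))
        (hdis (by simp : (inl 1 : Fin 3 ⊕ Fin 3) ≠ inl 2))
        (hcyc 0 b (hallL 0) hpb) (hcyc 1 b (hallL 1) hpb) (hcyc 2 b (hallL 2) hpb)
    · push_neg at hallL
      obtain ⟨aL, haL⟩ := hallL
      have hopure : ∀ w, w ≠ inl aL → w ≠ inr bR → Pure w := by
        intro w h1 h2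
        by_contra hnp'
        exact h3np w (inl aL) (inr bR) h1 h2 (by simp) hnp' haL hbR
      obtain ⟨a1, a2, ha12, ha1L, ha2L⟩ := two_compl aL
      obtain ⟨b1, b2, hb12, hb1R, hb2R⟩ := two_compl bR
      have hpa1 : Pure (inl a1) := hopure _ (by simp [ha1L]) (by simp)
      have hpa2 : Pure (inl a2) := hopure _ (by simp [ha2L]) (by simp)
      have hpb1 : Pure (inr b1) := hopure _ (by simp) (by simp [hb1R])
      have hpb2 : Pure (inr b2) := hopure _ (by simp) (by simp [hb2R])
      -- external vertex
      have hv : ∃ i : Fin m, Sum.inl i ∈ f (inl aL) ∨ Sum.inl i ∈ f (inr bR) := by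
        obtain ⟨u, hu, v, hv', huv⟩ := hK aL bR
        rcases u with i | s
        · exact ⟨i, Or.inl hu⟩
        rcases v with j | t
        · exact ⟨j, Or.inr hv'⟩
        · exact absurd huv dw_adj_rr
      obtain ⟨v0, hv0⟩ := hv
      have hout : ∀ w : Fin 3 ⊕ Fin 3, w ≠ inl aL → w ≠ inr bR →
          v0 ∉ {i : Fin m | Sum.inl i ∈ f w} := by
        intro w h1 h2 hmem
        rcases hv0 with h | h
        · exact Set.disjoint_left.mp (hdisj h1) hmem h
        · exact Set.disjoint_left.mp (hdisj h2) hmem h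
      exact no_bip hm
        (hout (inl a1) (by simp [ha1L]) (by simp))
        (hout (inl a2) (by simp [ha2L]) (by simp))
        (hout (inr b1) (by simp) (by simp [hb1R]))
        (hout (inr b2) (by simp) (by simp [hb2R]))
        (pure_conn hm hpa1 (hconn (inl a1))) (pure_conn hm hpa2 (hconn (inl a2)))
        (pure_conn hm hpb1 (hconn (inr b1))) (pure_conn hm hpb2 (hconn (inr b2)))
        (hdis (by simp [ha12])) (hdis (by simp)) (hdis (by simp))
        (hdis (by simp)) (hdis (by simp)) (hdis (by simp [hb12]))
        (hcyc a1 b1 hpa1 hpb1) (hcyc a1 b2 hpa1 hpb2)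
        (hcyc a2 b1 hpa2 hpb1) (hcyc a2 b2 hpa2 hpb2)

end NoMinor2

end SparseAux
namespace SparseAux

section Constructions

open Sum

lemma join_adj_rr {m : ℕ} {s t : Fin 2} :
    (Join (cycleGraph m) (⊤ : SimpleGraph (Fin 2))).Adj (inr s) (inr t) ↔
      (⊤ : SimpleGraph (Fin 2)).Adj s t := Iff.rfl

theorem nonplanar3 : ¬ IsPlanar (Join (cycleGraph 3) (⊤ : SimpleGraph (Fin 2))) := by
  rintro ⟨h5, -⟩
  apply h5
  refine ⟨fun w => {![Sum.inl 0, Sum.inl 1, Sum.inl 2, Sum.inr 0, Sum.inr 1] w},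
    fun w => ⟨_, rfl⟩, fun w => hub_conn _ rfl ?_, ?_, ?_⟩
  · intro x hx hne
    rw [Set.mem_singleton_iff] at hx
    exact absurd hx hne
  · intro w1 w2 hne
    rw [Set.disjoint_singleton]
    fin_cases w1 <;> fin_cases w2 <;> simp_all
  · intro a b hab
    have hne : a ≠ b := hab
    refine ⟨_, rfl, _, rfl, ?_⟩
    fin_cases a <;> fin_cases b <;>
      first
        | exact absurd rfl hne
        | exact join_adj_lr
        | exact join_adj_rl
        | exact join_adj_rr.mpr (by decide)
        | exact join_adj_ll.mpr (by decide)

theorem nonplanar4 {m : ℕ} [NeZero m] (hm : 4 ≤ m) :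
    ¬ IsPlanar (Join (cycleGraph m) (⊤ : SimpleGraph (Fin 2))) := by
  have hm3 : 3 ≤ m := by omega
  rintro ⟨-, h33⟩
  apply h33
  set z0 : Fin m := ⟨0, by omega⟩
  set z1 : Fin m := ⟨1, by omega⟩
  set z2 : Fin m := ⟨2, by omega⟩
  set z3 : Fin m := ⟨3, by omega⟩
  set ztop : Fin m := ⟨m - 1, by omega⟩
  set arcS : Set (Fin m ⊕ Fin 2) := Sum.inl '' {i : Fin m | 3 ≤ i.val} with harc
  set G := Join (cycleGraph m) (⊤ : SimpleGraph (Fin 2)) with hG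
  set f : Fin 3 ⊕ Fin 3 → Set (Fin m ⊕ Fin 2) :=
    Sum.elim ![{inr 0}, {inl z0}, {inl z2}] ![{inr 1}, {inl z1}, arcS] with hf
  have hz3arc : (inl z3 : Fin m ⊕ Fin 2) ∈ arcS := ⟨z3, by show 3 ≤ (3:ℕ); omega, rfl⟩
  have hztoparc : (inl ztop : Fin m ⊕ Fin 2) ∈ arcS := ⟨ztop, by show 3 ≤ m - 1; omega, rfl⟩
  have hsingle : ∀ (B : Set (Fin m ⊕ Fin 2)) (x : Fin m ⊕ Fin 2), B = {x} →
      (G.induce B).Connected := by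
    rintro B x rfl
    refine hub_conn _ rfl ?_
    intro y hy hne
    rw [Set.mem_singleton_iff] at hy
    exact absurd hy hne
  have harc_conn : (G.induce arcS).Connected :=
    conn_up (fun i j h => join_adj_ll.mpr h) (arc_conn hm3 (by omega))
  refine ⟨f, ?_, ?_, ?_, ?_⟩
  · rintro (a | b) <;> [fin_cases a; fin_cases b] <;>
      first | exact ⟨_, rfl⟩ | exact ⟨_, hz3arc⟩
  · rintro (a | b) <;> [fin_cases a; fin_cases b] <;>
      first | exact hsingle _ _ rfl | exact harc_conn
  · intro w1 w2 hne
    have hmem_arc_r : ∀ t : Fin 2, (inr t : Fin m ⊕ Fin 2) ∉ arcS := by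
      rintro t ⟨i, -, h⟩; exact absurd h (by simp)
    have hmem_arc_0 : (inl z0 : Fin m ⊕ Fin 2) ∉ arcS := by
      rintro ⟨i, hi, h⟩
      have : i = z0 := Sum.inl.inj h
      subst this
      exact absurd hi (by show ¬ 3 ≤ (0:ℕ); omega)
    have hmem_arc_1 : (inl z1 : Fin m ⊕ Fin 2) ∉ arcS := by
      rintro ⟨i, hi, h⟩
      have : i = z1 := Sum.inl.inj h
      subst this
      exact absurd hi (by show ¬ 3 ≤ (1:ℕ); omega)
    have hmem_arc_2 : (inl z2 : Fin m ⊕ Fin 2) ∉ arcS := by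
      rintro ⟨i, hi, h⟩
      have : i = z2 := Sum.inl.inj h
      subst this
      exact absurd hi (by show ¬ 3 ≤ (2:ℕ); omega)
    have hz01 : z0 ≠ z1 := by simp [z0, z1, Fin.ext_iff]
    have hz02 : z0 ≠ z2 := by simp [z0, z2, Fin.ext_iff]
    have hz12 : z1 ≠ z2 := by simp [z1, z2, Fin.ext_iff]
    have hz10 : z1 ≠ z0 := hz01.symm
    have hz20 : z2 ≠ z0 := hz02.symm
    have hz21 : z2 ≠ z1 := hz12.symm
    rcases w1 with a1 | a1 <;> rcases w2 with a2 | a2 <;>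
      fin_cases a1 <;> fin_cases a2 <;>
      simp only [hf, Sum.elim_inl, Sum.elim_inr, Matrix.cons_val_zero, Matrix.cons_val_one,
        Matrix.cons_val_two, Matrix.head_cons, Matrix.tail_cons] <;>
      simp_all [Set.disjoint_singleton, Set.disjoint_singleton_left,
        Set.disjoint_singleton_right]
  · intro a b hab
    rcases a with x | x <;> rcases b with y | y
    · simp [completeBipartiteGraph] at hab
    · fin_cases x <;> fin_cases y <;>
        simp only [hf, Sum.elim_inl, Sum.elim_inr, Matrix.cons_val_zero, Matrix.cons_val_one,
          Matrix.cons_val_two, Matrix.head_cons, Matrix.tail_cons]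
      · exact ⟨_, rfl, _, rfl, join_adj_rr.mpr (by decide)⟩
      · exact ⟨_, rfl, _, rfl, join_adj_rl⟩
      · exact ⟨_, rfl, _, hz3arc, join_adj_rl⟩
      · exact ⟨_, rfl, _, rfl, join_adj_lr⟩
      · exact ⟨_, rfl, _, rfl,
          join_adj_ll.mpr (adj_succ (i := z0) hm3 (by show (0:ℕ)+1 < m; omega))⟩
      · exact ⟨_, rfl, _, hztoparc, join_adj_ll.mpr (adj_wrap hm3)⟩
      · exact ⟨_, rfl, _, rfl, join_adj_lr⟩
      · exact ⟨_, rfl, _, rfl,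
          (join_adj_ll.mpr (adj_succ (i := z1) hm3 (by show (1:ℕ)+1 < m; omega))).symm⟩
      · exact ⟨_, rfl, _, hz3arc,
          join_adj_ll.mpr (adj_succ (i := z2) hm3 (by show (2:ℕ)+1 < m; omega))⟩
    · fin_cases x <;> fin_cases y <;>
        simp only [hf, Sum.elim_inl, Sum.elim_inr, Matrix.cons_val_zero, Matrix.cons_val_one,
          Matrix.cons_val_two, Matrix.head_cons, Matrix.tail_cons]
      · exact ⟨_, rfl, _, rfl, join_adj_rr.mpr (by decide)⟩
      · exact ⟨_, rfl, _, rfl, join_adj_rl⟩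
      · exact ⟨_, rfl, _, rfl, join_adj_rl⟩
      · exact ⟨_, rfl, _, rfl, join_adj_lr⟩
      · exact ⟨_, rfl, _, rfl,
          (join_adj_ll.mpr (adj_succ (i := z0) hm3 (by show (0:ℕ)+1 < m; omega))).symm⟩
      · exact ⟨_, rfl, _, rfl,
          join_adj_ll.mpr (adj_succ (i := z1) hm3 (by show (1:ℕ)+1 < m; omega))⟩
      · exact ⟨_, hz3arc, _, rfl, join_adj_lr⟩
      · exact ⟨_, hztoparc, _, rfl, (join_adj_ll.mpr (adj_wrap hm3)).symm⟩
      · exact ⟨_, hz3arc, _, rfl,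
          (join_adj_ll.mpr (adj_succ (i := z2) hm3 (by show (2:ℕ)+1 < m; omega))).symm⟩
    · simp [completeBipartiteGraph] at hab

end Constructions

end SparseAux
namespace SparseAux

section Count

open Sum Finset

instance joinDecidable {α β : Type*} {G : SimpleGraph α} {H : SimpleGraph β}
    [DecidableRel G.Adj] [DecidableRel H.Adj] : DecidableRel (Join G H).Adj := fun x y =>
  match x, y with
  | inl a, inl b => decidable_of_iff (G.Adj a b) Iff.rfl
  | inl _, inr _ => isTrue trivial
  | inr _, inl _ => isTrue trivial
  | inr a, inr b => decidable_of_iff (H.Adj a b) Iff.rfl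

instance topDecidable {α : Type*} [DecidableEq α] :
    DecidableRel (⊤ : SimpleGraph α).Adj := fun a b =>
  decidable_of_iff (a ≠ b) Iff.rfl

lemma count_edges (k : ℕ) :
    (Join (cycleGraph (k+3)) (⊤ : SimpleGraph (Fin 2))).edgeSet.ncard = 3 * (k + 3) + 1 := by
  set G := Join (cycleGraph (k+3)) (⊤ : SimpleGraph (Fin 2)) with hG
  have hdegL : ∀ i : Fin (k+3), G.degree (inl i) = 4 := by
    intro i
    have hne : (i - 1 : Fin (k+3)) ≠ i + 1 := by
      rw [Fin.ne_iff_vne]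
      rcases k with - | k' 
      · rw [Fin.coe_sub_one, Fin.val_add_one]
        have h1 := i.isLt
        have h0 : (i = 0) ↔ i.val = 0 := Fin.ext_iff
        have hl : (i = Fin.last (0+2)) ↔ i.val = 0 + 2 := Fin.ext_iff
        split_ifs <;> simp_all <;> omega
      · rw [Fin.coe_sub_one, Fin.val_add_one]
        have h1 := i.isLt
        have h0 : (i = 0) ↔ i.val = 0 := Fin.ext_iff
        have hl : (i = Fin.last (k'+1+2)) ↔ i.val = k'+1+2 := Fin.ext_iff
        split_ifs <;> simp_all <;> omega
    have hnf : G.neighborFinset (inl i) =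
        {inl (i-1), inl (i+1), inr 0, inr 1} := by
      ext x
      simp only [mem_neighborFinset, Finset.mem_insert, Finset.mem_singleton]
      rcases x with j | t
      · have hmem : (cycleGraph (k+3)).Adj i j ↔ j ∈ (cycleGraph (k+3)).neighborSet i :=
          Iff.rfl
        rw [show (G.Adj (inl i) (inl j)) = ((cycleGraph (k+3)).Adj i j) from rfl, hmem,
          show (k + 3) = (k + 1) + 2 by omega] at *
        rw [cycleGraph_neighborSet]
        simp only [Set.mem_insert_iff, Set.mem_singleton_iff]
        constructor
        · rintro (h | h) <;> simp [h]
        · rintro (h | h | h | h) <;> simp_all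
      · have : G.Adj (inl i) (inr t) := join_adj_lr
        simp only [this, true_iff]
        fin_cases t <;> simp
    rw [SimpleGraph.degree, hnf]
    rw [Finset.card_insert_of_notMem (by simp [hne]),
      Finset.card_insert_of_notMem (by simp),
      Finset.card_insert_of_notMem (by simp), Finset.card_singleton]
  have hdegR : ∀ t : Fin 2, G.degree (inr t) = (k + 3) + 1 := by
    intro t
    have hnf : ∀ t' : Fin 2, t' ≠ t →
        G.neighborFinset (inr t) = (Finset.univ.image (Sum.inl : Fin (k+3) → _)) ∪ {inr t'} := by
      intro t' ht'
      ext x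
      simp only [Finset.mem_union, Finset.mem_image, Finset.mem_singleton, mem_neighborFinset]
      rcases x with j | s
      · have : G.Adj (inr t) (inl j) := join_adj_rl
        simp [this]
      · have : G.Adj (inr t) (inr s) ↔ s ≠ t := by
          rw [show (G.Adj (inr t) (inr s)) = ((⊤ : SimpleGraph (Fin 2)).Adj t s) from rfl]
          simp [ne_comm]
        simp only [this]
        constructor
        · intro h
          right
          congr 1
          have i1 := s.isLt
          have i2 := t.isLt
          have i3 := t'.isLt
          have k1 : s.val ≠ t.val := fun hh => h (Fin.ext hh)
          have k2 : t'.val ≠ t.val := fun hh => ht' (Fin.ext hh)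
          exact Fin.ext (by omega)
        · rintro (⟨j, -, hj⟩ | hj)
          · exact absurd hj (by simp)
          · have : s = t' := Sum.inr.inj hj
            exact this ▸ ht'
    have ht2 : (1 - t : Fin 2) ≠ t := by
      have := t.isLt
      fin_cases t <;> decide
    rw [SimpleGraph.degree, hnf (1 - t) ht2]
    rw [Finset.card_union_of_disjoint (by simp), Finset.card_singleton,
      Finset.card_image_of_injective _ Sum.inl_injective, Finset.card_univ, Fintype.card_fin]
  have hsum := G.sum_degrees_eq_twice_card_edges
  rw [Fintype.sum_sum_type] at hsum
  simp only [hdegL, hdegR, Finset.sum_const, Finset.card_univ, Fintype.card_fin,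
    smul_eq_mul] at hsum
  have hcard : G.edgeSet.ncard = G.edgeFinset.card := by
    rw [SimpleGraph.edgeFinset, Set.ncard_eq_toFinset_card']
  omega

end Count

end SparseAux
namespace SparseAux

section Transfer

variable {α β W : Type*} {G : SimpleGraph α} {G' : SimpleGraph β} {K : SimpleGraph W}

lemma minor_map (φ : G ≃g G') : IsMinor K G → IsMinor K G' := by
  rintro ⟨f, h1, h2, h3, h4⟩
  refine ⟨fun w => φ '' f w, fun w => (h1 w).image _, fun w => ?_, ?_, ?_⟩
  · have iso : G.induce (f w) ≃g G'.induce (φ '' f w) := by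
      refine ⟨φ.toEquiv.image (f w), ?_⟩
      intro a b
      simp only [Equiv.image, Equiv.coe_fn_mk, comap_adj, Function.Embedding.coe_subtype]
      exact φ.map_rel_iff
    exact (SimpleGraph.Iso.connected_iff iso).mp (h2 w)
  · intro w1 w2 hne
    exact Set.disjoint_image_of_injective φ.toEquiv.injective (h3 hne)
  · intro a b hab
    obtain ⟨u, hu, v, hv, huv⟩ := h4 hab
    exact ⟨φ u, Set.mem_image_of_mem _ hu, φ v, Set.mem_image_of_mem _ hv,
      φ.map_rel_iff.mpr huv⟩

lemma planar_map (φ : G ≃g G') : IsPlanar G ↔ IsPlanar G' := by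
  constructor
  · rintro ⟨h5, h33⟩
    exact ⟨fun h => h5 (minor_map φ.symm h), fun h => h33 (minor_map φ.symm h)⟩
  · rintro ⟨h5, h33⟩
    exact ⟨fun h => h5 (minor_map φ h), fun h => h33 (minor_map φ h)⟩

def deleteIso (φ : G ≃g G') (e : Sym2 α) :
    G.deleteEdges {e} ≃g G'.deleteEdges {Sym2.map φ e} := by
  refine ⟨φ.toEquiv, ?_⟩
  intro a b
  simp only [deleteEdges_adj, Set.mem_singleton_iff]
  have h1 : G'.Adj (φ.toEquiv a) (φ.toEquiv b) ↔ G.Adj a b := φ.map_rel_iff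
  have h2 : s(φ.toEquiv a, φ.toEquiv b) = Sym2.map (⇑φ) e ↔ s(a, b) = e := by
    rw [show s(φ.toEquiv a, φ.toEquiv b) = Sym2.map (⇑φ) s(a, b) from (Sym2.map_pair_eq _ _ _).symm]
    exact (Sym2.map.injective φ.injective).eq_iff
  rw [h1, h2]

end Transfer

end SparseAux
namespace SparseAux

lemma count_edges' {m : ℕ} (hm : 3 ≤ m) :
    (Join (cycleGraph m) (⊤ : SimpleGraph (Fin 2))).edgeSet.ncard = 3 * m + 1 := by
  obtain ⟨k, rfl⟩ : ∃ k, m = k + 3 := ⟨m - 3, by omega⟩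
  exact count_edges k

end SparseAux

open SparseAux

/-- For every `n ≥ 5` there is a simple graph on `n` vertices with
exactly `3n - 5` edges that is non-planar but becomes planar after removing a
single suitable edge. -/
theorem exists_sparse_maximal (n : ℕ) (hn : 5 ≤ n) :
    ∃ G : SimpleGraph (Fin n),
      G.edgeSet.ncard = 3 * n - 5 ∧ ¬ IsPlanar G ∧
      ∃ e ∈ G.edgeSet, IsPlanar (G.deleteEdges {e}) := by
  classical
  have hm3 : 3 ≤ n - 2 := by omega
  haveI : NeZero (n - 2) := ⟨by omega⟩
  set H := Gn n with hH
  set ee : (Fin (n - 2) ⊕ Fin 2) ≃ Fin n := finSumFinEquiv.trans (finCongr (by omega))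
    with hee
  set φ : H ≃g H.map ee.toEmbedding := SimpleGraph.Iso.map ee H with hφ
  refine ⟨H.map ee.toEmbedding, ?_, ?_, ?_⟩
  · have h1 : (H.map ee.toEmbedding).edgeSet.ncard = H.edgeSet.ncard := by
      rw [← Nat.card_coe_set_eq, ← Nat.card_coe_set_eq]
      exact Nat.card_congr φ.mapEdgeSet.symm
    rw [h1, show H = Join (cycleGraph (n-2)) (⊤ : SimpleGraph (Fin 2)) from rfl,
      count_edges' hm3]
    omega
  · intro hpl
    have hpl' : IsPlanar H := (planar_map φ).mpr hpl
    rcases Nat.lt_or_ge n 6 with h | h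
    · have hn5 : n = 5 := by omega
      subst hn5
      exact nonplanar3 hpl'
    · exact nonplanar4 (show 4 ≤ n - 2 by omega) hpl'
  · refine ⟨Sym2.map φ s(Sum.inr 0, Sum.inr 1), ?_, ?_⟩
    · have hadj : H.Adj (Sum.inr 0) (Sum.inr 1) := join_adj_rr.mpr (by decide)
      have : (H.map ee.toEmbedding).Adj (φ (Sum.inr 0)) (φ (Sum.inr 1)) :=
        φ.map_rel_iff.mpr hadj
      rw [Sym2.map_pair_eq]
      exact (SimpleGraph.mem_edgeSet _).mpr this
    · apply (planar_map (deleteIso φ s(Sum.inr 0, Sum.inr 1))).mp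
      exact ⟨noK5 hm3, noK33 hm3⟩
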